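/- If a graph G with m edges has spectral radius λ₁ ≥ √m, then G contains a triangle, unless G is a complete bipartite graph together with possibly some isolated vertices. -/

import Mathlib

open Finset Matrix

lemma nik_psd {V : Type*} [Fintype V] [DecidableEq V] (G : SimpleGraph V) [DecidableRel G.Adj]
    (lam : ℝ)
    (hmax : ∀ μ : ℝ, (∃ x : V → ℝ, x ≠ 0 ∧ (G.adjMatrix ℝ).mulVec x = μ • x) → μ ≤ lam) :
    (lam • (1 : Matrix V V ℝ) - G.adjMatrix ℝ).PosSemidef := by
  have hA : (G.adjMatrix ℝ).IsHermitian := by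
    ext i j
    simp [Matrix.conjTranspose_apply, SimpleGraph.adjMatrix_apply, SimpleGraph.adj_comm]
  have hB : (lam • (1 : Matrix V V ℝ) - G.adjMatrix ℝ).IsHermitian := by
    refine Matrix.IsHermitian.sub ?_ hA
    unfold Matrix.IsHermitian
    simp
  apply hB.posSemidef_iff_eigenvalues_nonneg.mpr
  intro i
  set ν := hB.eigenvalues i with hν
  have hBv := hB.mulVec_eigenvectorBasis i
  rw [Matrix.sub_mulVec, Matrix.smul_mulVec, Matrix.one_mulVec] at hBv
  set v : V → ℝ := (WithLp.equiv 2 (V → ℝ)) (hB.eigenvectorBasis i) with hv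
  have hBv' : lam • v - (G.adjMatrix ℝ) *ᵥ v = ν • v := hBv
  have hv0 : v ≠ 0 := by
    have h := hB.eigenvectorBasis.orthonormal.ne_zero i
    intro hc
    apply h
    ext j
    exact congrFun hc j
  have hAv : (G.adjMatrix ℝ) *ᵥ v = (lam - ν) • v := by
    rw [sub_smul, ← hBv']
    abel
  have := hmax (lam - ν) ⟨v, hv0, hAv⟩
  show (0:ℝ) ≤ ν
  linarith

lemma nik_key {V : Type*} [Fintype V] [DecidableEq V] (G : SimpleGraph V) [DecidableRel G.Adj]
    (hfree : G.CliqueFree 3) (lam M : ℝ) (z : V → ℝ)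
    (heig : (G.adjMatrix ℝ).mulVec z = lam • z)
    (hMpos : 0 < M) (hMb : ∀ v, z v ≤ M)
    (hm : (G.edgeFinset.card : ℝ) ≤ lam ^ 2)
    (a : V) (ha : z a = M) :
    (∀ w v, G.Adj a w → G.Adj w v → z v = M) ∧
      (∀ p q, G.Adj p q → G.Adj a p ∨ G.Adj a q) := by
  classical
  set m := G.edgeFinset.card with hmdef
  set T : Finset ((_ : V) × V) :=
    (G.neighborFinset a).sigma (fun w => G.neighborFinset w) with hT
  have hmemT : ∀ p : (_ : V) × V, p ∈ T ↔ G.Adj a p.1 ∧ G.Adj p.1 p.2 := by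
    intro p
    simp [hT, Finset.mem_sigma]
  have hinj : Set.InjOn (fun p : (_ : V) × V => s(p.1, p.2)) T := by
    rintro ⟨w, v⟩ hwv ⟨w', v'⟩ hwv' hsym
    have h1 := (hmemT _).1 hwv
    have h2 := (hmemT _).1 hwv'
    simp only at hsym
    rcases Sym2.eq_iff.1 hsym with ⟨rfl, rfl⟩ | ⟨rfl, rfl⟩
    · rfl
    · exact absurd (SimpleGraph.is3Clique_triple_iff.mpr ⟨h1.1, h2.1, h1.2⟩) (hfree _)
  have hsub : ∀ p ∈ T, s(p.1, p.2) ∈ G.edgeFinset := by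
    rintro ⟨w, v⟩ hwv
    exact SimpleGraph.mem_edgeFinset.2 ((G.mem_edgeSet).2 ((hmemT _).1 hwv).2)
  have hcard : T.card ≤ m := Finset.card_le_card_of_injOn _ hsub hinj
  have hAz : ∀ v, ∑ w ∈ G.neighborFinset v, z w = lam * z v := by
    intro v
    have h := congrFun heig v
    rwa [SimpleGraph.adjMatrix_mulVec_apply, Pi.smul_apply, smul_eq_mul] at h
  have hsum : ∑ p ∈ T, z p.2 = lam ^ 2 * M := by
    rw [hT, Finset.sum_sigma]
    calc ∑ w ∈ G.neighborFinset a, ∑ v ∈ G.neighborFinset w, z v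
        = ∑ w ∈ G.neighborFinset a, lam * z w :=
          Finset.sum_congr rfl fun w _ => hAz w
      _ = lam * (lam * z a) := by rw [← Finset.mul_sum, hAz a]
      _ = lam ^ 2 * M := by rw [ha]; ring
  have hle1 : ∑ p ∈ T, z p.2 ≤ (T.card : ℝ) * M := by
    calc ∑ p ∈ T, z p.2 ≤ ∑ _p ∈ T, M := Finset.sum_le_sum fun p _ => hMb p.2
      _ = (T.card : ℝ) * M := by rw [Finset.sum_const, nsmul_eq_mul]
  have h1 : (T.card : ℝ) * M ≤ (m : ℝ) * M :=
    mul_le_mul_of_nonneg_right (by exact_mod_cast hcard) hMpos.le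
  have h2 : (m : ℝ) * M ≤ lam ^ 2 * M := mul_le_mul_of_nonneg_right hm hMpos.le
  have hTcardM : (∑ p ∈ T, z p.2) = (T.card : ℝ) * M := by linarith
  have hTm : T.card = m := by
    have hc : (T.card : ℝ) * M = (m : ℝ) * M := by linarith
    have := mul_right_cancel₀ hMpos.ne' hc
    exact_mod_cast this
  have himg : T.image (fun p : (_ : V) × V => s(p.1, p.2)) = G.edgeFinset := by
    apply Finset.eq_of_subset_of_card_le
    · intro e he
      obtain ⟨p, hp, rfl⟩ := Finset.mem_image.1 he
      exact hsub p hp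
    · rw [Finset.card_image_of_injOn hinj, hTm]
  have hzM : ∀ p ∈ T, z p.2 = M := by
    have hconst : ∑ p ∈ T, z p.2 = ∑ _p ∈ T, M := by
      rw [Finset.sum_const, nsmul_eq_mul]; exact hTcardM
    exact fun p hp => (Finset.sum_eq_sum_iff_of_le fun q _ => hMb q.2).1 hconst p hp
  constructor
  · intro w v haw hwv
    exact hzM ⟨w, v⟩ ((hmemT _).2 ⟨haw, hwv⟩)
  · intro p q hpq
    have hmem : s(p, q) ∈ T.image (fun p : (_ : V) × V => s(p.1, p.2)) := by
      rw [himg]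
      exact SimpleGraph.mem_edgeFinset.2 ((G.mem_edgeSet).2 hpq)
    obtain ⟨⟨w, v⟩, hwT, hs⟩ := Finset.mem_image.1 hmem
    have hw := ((hmemT _).1 hwT).1
    simp only at hs
    rcases Sym2.eq_iff.1 hs with ⟨hwp, -⟩ | ⟨hwq, -⟩
    · exact Or.inl (hwp ▸ hw)
    · exact Or.inr (hwq ▸ hw)



/-- If a graph `G` with `m` edges has spectral radius `λ₁ ≥ √m`, then `G` contains a
triangle, unless `G` is a complete bipartite graph together with possibly some
isolated vertices. -/
theorem nikiforov_sqrt_m {V : Type*} [Fintype V] [DecidableEq V] (G : SimpleGraph V)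
    [DecidableRel G.Adj] (lam : ℝ)
    (heig : ∃ x : V → ℝ, x ≠ 0 ∧ (G.adjMatrix ℝ).mulVec x = lam • x)
    (hmax : ∀ μ : ℝ, (∃ x : V → ℝ, x ≠ 0 ∧ (G.adjMatrix ℝ).mulVec x = μ • x) → μ ≤ lam)
    (h : Real.sqrt (G.edgeFinset.card) ≤ lam) :
    ¬ G.CliqueFree 3 ∨
      ∃ A B : Set V, Disjoint A B ∧
        (∀ u v : V, G.Adj u v ↔ ((u ∈ A ∧ v ∈ B) ∨ (u ∈ B ∧ v ∈ A))) := by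
  classical
  by_cases hfree : G.CliqueFree 3
  swap
  · exact Or.inl hfree
  right
  obtain ⟨x, hx0, hx⟩ := heig
  have hpsd := nik_psd G lam hmax
  set A := G.adjMatrix ℝ with hAdef
  set z : V → ℝ := fun v => |x v| with hzdef
  -- quadratic form facts
  have hq1 : x ⬝ᵥ (A *ᵥ x) = lam * (x ⬝ᵥ x) := by
    rw [hx]
    simp [dotProduct_smul, smul_eq_mul]
  have hzz : z ⬝ᵥ z = x ⬝ᵥ x := by
    simp only [dotProduct, hzdef]
    exact Finset.sum_congr rfl fun v _ => abs_mul_abs_self _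
  have hAnn : ∀ v w, (0:ℝ) ≤ A v w := by
    intro v w
    simp only [hAdef, SimpleGraph.adjMatrix_apply]
    positivity
  have hq2 : x ⬝ᵥ (A *ᵥ x) ≤ z ⬝ᵥ (A *ᵥ z) := by
    simp only [dotProduct, Matrix.mulVec]
    refine Finset.sum_le_sum fun v _ => ?_
    simp only [dotProduct, Finset.mul_sum]
    refine Finset.sum_le_sum fun w _ => ?_
    calc x v * (A v w * x w) ≤ |x v * (A v w * x w)| := le_abs_self _
      _ = z v * (A v w * z w) := by
          rw [abs_mul, abs_mul, abs_of_nonneg (hAnn v w)]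
  have hquad : ∀ y : V → ℝ, y ⬝ᵥ ((lam • (1 : Matrix V V ℝ) - A) *ᵥ y)
      = lam * (y ⬝ᵥ y) - y ⬝ᵥ (A *ᵥ y) := by
    intro y
    rw [Matrix.sub_mulVec, Matrix.smul_mulVec, Matrix.one_mulVec,
      dotProduct_sub, dotProduct_smul, smul_eq_mul]
  have hq3 : z ⬝ᵥ (A *ᵥ z) ≤ lam * (x ⬝ᵥ x) := by
    have h0 := hpsd.dotProduct_mulVec_nonneg z
    rw [show star z = z from star_trivial z, hquad z, hzz] at h0
    linarith
  have hzeq : z ⬝ᵥ ((lam • (1 : Matrix V V ℝ) - A) *ᵥ z) = 0 := by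
    rw [hquad z, hzz]
    linarith
  have hzeig : A *ᵥ z = lam • z := by
    have h0 := (hpsd.dotProduct_mulVec_zero_iff z).1
      (by rw [star_trivial]; exact hzeq)
    have h1 : lam • z - A *ᵥ z = 0 := by
      rw [← h0, Matrix.sub_mulVec, Matrix.smul_mulVec, Matrix.one_mulVec]
    exact (sub_eq_zero.mp h1).symm
  have hz0 : ∃ v, z v ≠ 0 := by
    by_contra hc
    push_neg at hc
    exact hx0 (funext fun v => abs_eq_zero.1 (hc v))
  obtain ⟨v₀, hv₀⟩ := hz0
  obtain ⟨u, -, hu⟩ := Finset.exists_max_image Finset.univ z ⟨v₀, Finset.mem_univ v₀⟩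
  have hMb : ∀ v, z v ≤ z u := fun v => hu v (Finset.mem_univ v)
  have hMpos : 0 < z u := by
    have h0 : 0 < z v₀ := lt_of_le_of_ne (abs_nonneg _) (Ne.symm hv₀)
    exact lt_of_lt_of_le h0 (hMb v₀)
  have hm : (G.edgeFinset.card : ℝ) ≤ lam ^ 2 := by
    have h1 := Real.sq_sqrt (show (0:ℝ) ≤ (G.edgeFinset.card : ℝ) from Nat.cast_nonneg _)
    nlinarith [Real.sqrt_nonneg ((G.edgeFinset.card : ℝ)), h]
  have key := fun (a : V) (ha : z a = z u) =>
    nik_key G hfree lam (z u) z hzeig hMpos hMb hm a ha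
  refine ⟨{v | ∃ w, G.Adj u w ∧ G.Adj w v}, {v | G.Adj u v}, ?_, ?_⟩
  · rw [Set.disjoint_left]
    rintro p ⟨w, huw, hwp⟩ hup
    exact hfree _ (SimpleGraph.is3Clique_triple_iff.mpr ⟨huw, hup, hwp⟩)
  · intro p q
    constructor
    · intro hpq
      rcases (key u rfl).2 p q hpq with hup | huq
      · exact Or.inr ⟨hup, ⟨p, hup, hpq⟩⟩
      · exact Or.inl ⟨⟨q, huq, hpq.symm⟩, huq⟩
    · rintro (⟨⟨w₀, huw₀, hw₀p⟩, huq⟩ | ⟨hup, ⟨w₀, huw₀, hw₀q⟩⟩)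
      · have hpM : z p = z u := (key u rfl).1 w₀ p huw₀ hw₀p
        rcases (key p hpM).2 u q huq with hpu | hpq
        · exact absurd (SimpleGraph.is3Clique_triple_iff.mpr ⟨huw₀, hpu.symm, hw₀p⟩) (hfree _)
        · exact hpq
      · have hqM : z q = z u := (key u rfl).1 w₀ q huw₀ hw₀q
        rcases (key q hqM).2 u p hup with hqu | hqp
        · exact absurd (SimpleGraph.is3Clique_triple_iff.mpr ⟨huw₀, hqu.symm, hw₀q⟩) (hfree _)
        · exact hqp.symm
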